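/- For every real x with 0 < |x| < π/2, the continued fraction x/(1 − x²/(3 − x²/(5 − x²/(7 − ...)))) converges, and its value equals tan(x). -/

import Mathlib

open Filter Real

/-- Partial numerators of Lambert's continued fraction for `tan`: `p 1 = x`, `p k = -x²`. -/
noncomputable def tanP (x : ℝ) (k : ℕ) : ℝ := if k = 1 then x else -x ^ 2

/-- Partial denominators: `q k = 2k - 1`. -/
noncomputable def tanQ (k : ℕ) : ℝ := 2 * (k : ℝ) - 1

/-- Numerators of the convergents (`tanA x (k+1)` is `A_k`, with `A_{-1} = 1`, `A_0 = 0`). -/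
noncomputable def tanA (x : ℝ) : ℕ → ℝ
  | 0 => 1
  | 1 => 0
  | n + 2 => tanQ (n + 1) * tanA x (n + 1) + tanP x (n + 1) * tanA x n

/-- Denominators of the convergents (`tanB x (k+1)` is `B_k`, with `B_{-1} = 0`, `B_0 = 1`). -/
noncomputable def tanB (x : ℝ) : ℕ → ℝ
  | 0 => 0
  | 1 => 1
  | n + 2 => tanQ (n + 1) * tanB x (n + 1) + tanP x (n + 1) * tanB x n

/-! Auxiliary development: the integrals `II x n = ∫_{-1}^1 (1-z²)ⁿ cos(xz) dz`. -/

noncomputable def II (x : ℝ) (n : ℕ) : ℝ := ∫ z in (-1:ℝ)..1, (1 - z^2)^n * Real.cos (x*z)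

lemma II_intble (x : ℝ) (n : ℕ) :
    IntervalIntegrable (fun z : ℝ => (1 - z^2)^n * Real.cos (x*z)) MeasureTheory.volume (-1) 1 := by
  apply Continuous.intervalIntegrable
  fun_prop

lemma II_pos {x : ℝ} (hx2 : |x| < π/2) (n : ℕ) : 0 < II x n := by
  apply intervalIntegral.intervalIntegral_pos_of_pos_on (II_intble x n) _ (by norm_num)
  intro z hz
  have hz1 : |z| < 1 := abs_lt.mpr ⟨hz.1, hz.2⟩
  have h1 : 0 < 1 - z^2 := by nlinarith [abs_nonneg z, sq_abs z]
  have hxz : |x*z| < π/2 := by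
    rw [abs_mul]
    calc |x| * |z| ≤ |x| * 1 := by nlinarith [abs_nonneg x]
    _ < π/2 := by simpa using hx2
  have h2 : 0 < Real.cos (x*z) := by
    apply Real.cos_pos_of_mem_Ioo
    exact ⟨by linarith [(abs_lt.mp hxz).1], (abs_lt.mp hxz).2⟩
  positivity

lemma II_le_two (x : ℝ) (n : ℕ) : II x n ≤ 2 := by
  have : II x n ≤ ∫ _ in (-1:ℝ)..1, (1:ℝ) := by
    apply intervalIntegral.integral_mono_on (by norm_num) (II_intble x n)
      (by apply Continuous.intervalIntegrable; fun_prop)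
    intro z hz
    have h0 : 0 ≤ 1 - z^2 := by nlinarith [hz.1, hz.2]
    have h1 : 1 - z^2 ≤ 1 := by nlinarith [hz.1, hz.2]
    calc (1 - z^2)^n * Real.cos (x*z) ≤ (1 - z^2)^n * 1 := by
          apply mul_le_mul_of_nonneg_left (Real.cos_le_one _) (by positivity)
    _ ≤ 1 := by simpa using pow_le_one₀ h0 h1
  norm_num at this; linarith

lemma hd_lin (x t : ℝ) : HasDerivAt (fun z : ℝ => x*z) x t := by
  simpa using (hasDerivAt_id t).const_mul x

lemma hd_sin (x t : ℝ) : HasDerivAt (fun z : ℝ => Real.sin (x*z)) (Real.cos (x*t) * x) t := by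
  simpa [Function.comp_def] using (Real.hasDerivAt_sin (x*t)).comp t (hd_lin x t)

lemma hd_cos (x t : ℝ) : HasDerivAt (fun z : ℝ => Real.cos (x*z)) (-Real.sin (x*t) * x) t := by
  simpa [Function.comp_def] using (Real.hasDerivAt_cos (x*t)).comp t (hd_lin x t)

lemma hd_poly (n : ℕ) (t : ℝ) : HasDerivAt (fun z : ℝ => (1 - z^2)^n)
    ((n:ℝ) * (1 - t^2)^(n-1) * (-(2*t))) t := by
  have hp : HasDerivAt (fun z : ℝ => 1 - z^2) (-(2*t)) t := by
    simpa [Pi.sub_def] using (hasDerivAt_const t (1:ℝ)).sub (hasDerivAt_pow 2 t)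
  exact hp.pow n

lemma II_zero {x : ℝ} (hx : x ≠ 0) : II x 0 = 2 * Real.sin x / x := by
  have hF : ∀ t ∈ Set.uIcc (-1:ℝ) 1, HasDerivAt (fun z : ℝ => Real.sin (x*z) / x)
      ((1 - t^2)^0 * Real.cos (x*t)) t := by
    intro t _
    have h3 := (hd_sin x t).div_const x
    refine h3.congr_deriv ?_
    field_simp
  have := intervalIntegral.integral_eq_sub_of_hasDerivAt hF
    (by apply Continuous.intervalIntegrable; fun_prop)
  rw [II, this]
  simp [Real.sin_neg, mul_comm]
  ring

lemma II_one (x : ℝ) : x^3 * II x 1 = 4 * (Real.sin x - x * Real.cos x) := by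
  have key : ∫ z in (-1:ℝ)..1, x^3 * ((1 - z^2)^1 * Real.cos (x*z))
      = 4 * (Real.sin x - x * Real.cos x) := by
    have hF : ∀ t ∈ Set.uIcc (-1:ℝ) 1, HasDerivAt
        (fun z : ℝ => x^2*(1-z^2)*Real.sin (x*z) + 2*Real.sin (x*z) - 2*x*z*Real.cos (x*z))
        (x^3 * ((1 - t^2)^1 * Real.cos (x*t))) t := by
      intro t _
      have hp : HasDerivAt (fun z : ℝ => 1 - z^2) (-(2*t)) t := by
        simpa [Pi.sub_def] using (hasDerivAt_const t (1:ℝ)).sub (hasDerivAt_pow 2 t)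
      have hA := ((hp.const_mul (x^2)).mul (hd_sin x t))
      have hB := (hd_sin x t).const_mul 2
      have hC := ((hasDerivAt_id t).const_mul (2*x)).mul (hd_cos x t)
      have := (hA.add hB).sub hC
      refine this.congr_deriv ?_
      simp only [id_eq]
      ring
    have := intervalIntegral.integral_eq_sub_of_hasDerivAt hF
      (by apply Continuous.intervalIntegrable; fun_prop)
    rw [this]
    simp [Real.sin_neg, Real.cos_neg]
    ring
  rw [← key, II, intervalIntegral.integral_const_mul]

lemma II_rec (x : ℝ) (m : ℕ) : x^2 * II x (m+2)
    = (2*(m:ℝ)+4)*(2*(m:ℝ)+3) * II x (m+1) - (2*(m:ℝ)+4)*(2*(m:ℝ)+2) * II x m := by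
  have key : ∫ z in (-1:ℝ)..1,
      (x^2 * ((1 - z^2)^(m+2) * Real.cos (x*z))
        - (2*(m:ℝ)+4)*(2*(m:ℝ)+3) * ((1 - z^2)^(m+1) * Real.cos (x*z))
        + (2*(m:ℝ)+4)*(2*(m:ℝ)+2) * ((1 - z^2)^m * Real.cos (x*z))) = 0 := by
    have hF : ∀ t ∈ Set.uIcc (-1:ℝ) 1, HasDerivAt
        (fun z : ℝ => x*(1-z^2)^(m+2)*Real.sin (x*z) - (2*(m:ℝ)+4)*z*(1-z^2)^(m+1)*Real.cos (x*z))
        (x^2 * ((1 - t^2)^(m+2) * Real.cos (x*t))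
          - (2*(m:ℝ)+4)*(2*(m:ℝ)+3) * ((1 - t^2)^(m+1) * Real.cos (x*t))
          + (2*(m:ℝ)+4)*(2*(m:ℝ)+2) * ((1 - t^2)^m * Real.cos (x*t))) t := by
      intro t _
      have hA := ((hd_poly (m+2) t).const_mul x).mul (hd_sin x t)
      have hC := (((hasDerivAt_id t).const_mul ((2*(m:ℝ)+4))).mul (hd_poly (m+1) t)).mul (hd_cos x t)
      have := hA.sub hC
      refine this.congr_deriv ?_
      simp only [id_eq, Nat.add_sub_cancel, Pi.mul_apply]
      push_cast
      ring
    have := intervalIntegral.integral_eq_sub_of_hasDerivAt hF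
      (by apply Continuous.intervalIntegrable; fun_prop)
    rw [this]
    norm_num
  rw [intervalIntegral.integral_add, intervalIntegral.integral_sub] at key
  · rw [intervalIntegral.integral_const_mul, intervalIntegral.integral_const_mul,
      intervalIntegral.integral_const_mul] at key
    simp only [II]
    linarith
  all_goals apply Continuous.intervalIntegrable; fun_prop

/-! The normalized sequence `vv x n = x^(2n+1) II x n / (2ⁿ n!)`. -/

noncomputable def vv (x : ℝ) (n : ℕ) : ℝ := x^(2*n+1) * II x n / (2^n * (Nat.factorial n : ℝ))

lemma vv_zero {x : ℝ} (hx : x ≠ 0) : vv x 0 = 2 * Real.sin x := by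
  simp [vv, II_zero hx]
  field_simp

lemma vv_one {x : ℝ} : vv x 1 = 2 * (Real.sin x - x * Real.cos x) := by
  have := II_one x
  simp only [vv]
  norm_num
  linarith

lemma vv_rec (x : ℝ) (m : ℕ) :
    vv x (m+2) = (2*(m:ℝ)+3) * vv x (m+1) - x^2 * vv x m := by
  have h := II_rec x m
  have e1 : ((Nat.factorial (m+2) : ℕ) : ℝ) = ((m:ℝ)+2) * ((m:ℝ)+1) * ((Nat.factorial m : ℕ) : ℝ) := by
    push_cast [Nat.factorial_succ]; ring
  have e2 : ((Nat.factorial (m+1) : ℕ) : ℝ) = ((m:ℝ)+1) * ((Nat.factorial m : ℕ) : ℝ) := by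
    push_cast [Nat.factorial_succ]; ring
  simp only [vv, e1, e2]
  rw [mul_div_assoc', mul_div_assoc', div_sub_div _ _ (by positivity) (by positivity),
    div_eq_div_iff (by positivity) (by positivity)]
  linear_combination (x^(2*m+3) * 2^(2*m+1) * ((m:ℝ)+1) * (↑(Nat.factorial m))^2) * h

/-! Basic recurrences and identities for `tanA`, `tanB`. -/

lemma tanA_succ (x : ℝ) (n : ℕ) :
    tanA x (n+3) = (2*(n:ℝ)+3) * tanA x (n+2) - x^2 * tanA x (n+1) := by
  have h : tanA x (n+1+2) = tanQ (n+2) * tanA x (n+2) + tanP x (n+2) * tanA x (n+1) := rfl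
  rw [show n+3 = n+1+2 from rfl, h, tanQ, tanP]
  norm_num
  push_cast
  ring

lemma tanB_succ (x : ℝ) (n : ℕ) :
    tanB x (n+3) = (2*(n:ℝ)+3) * tanB x (n+2) - x^2 * tanB x (n+1) := by
  have h : tanB x (n+1+2) = tanQ (n+2) * tanB x (n+2) + tanP x (n+2) * tanB x (n+1) := rfl
  rw [show n+3 = n+1+2 from rfl, h, tanQ, tanP]
  norm_num
  push_cast
  ring

lemma tanA_two (x : ℝ) : tanA x 2 = x := by
  have h : tanA x 2 = tanQ 1 * tanA x 1 + tanP x 1 * tanA x 0 := rfl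
  rw [h, tanQ, tanP]
  norm_num [tanA]

lemma tanB_two (x : ℝ) : tanB x 2 = 1 := by
  have h : tanB x 2 = tanQ 1 * tanB x 1 + tanP x 1 * tanB x 0 := rfl
  rw [h, tanQ, tanP]
  norm_num [tanB]

lemma W_eq {x : ℝ} (hx : x ≠ 0) : ∀ n : ℕ,
    Real.cos x * tanA x (n+1) - Real.sin x * tanB x (n+1) = -vv x n / 2 := by
  intro n
  induction n using Nat.twoStepInduction with
  | zero =>
    simp [tanA, tanB, vv_zero hx]
    ring
  | one =>
    rw [tanA_two, tanB_two, vv_one]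
    ring
  | more n ih1 ih2 =>
    rw [show n+2+1 = n+3 from rfl, tanA_succ, tanB_succ, vv_rec]
    linear_combination (2*(n:ℝ)+3) * ih2 - x^2 * ih1

lemma det_eq (x : ℝ) : ∀ n : ℕ,
    tanA x (n+2) * tanB x (n+1) - tanA x (n+1) * tanB x (n+2) = x^(2*n+1) := by
  intro n
  induction n with
  | zero => simp [tanA_two, tanB_two, tanA, tanB, tanP, tanQ]
  | succ n ih =>
    rw [show n+1+2 = n+3 from rfl, tanA_succ, tanB_succ,
      show 2*(n+1)+1 = (2*n+1)+2 from by ring]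
    rw [pow_add, ← ih]
    ring

lemma tanA_neg (x : ℝ) : ∀ n : ℕ, tanA (-x) (n+1) = -tanA x (n+1) := by
  intro n
  induction n using Nat.twoStepInduction with
  | zero => simp [tanA]
  | one => rw [tanA_two, tanA_two]
  | more n ih1 ih2 =>
    rw [show n+2+1 = n+3 from rfl, tanA_succ, tanA_succ, ih1, ih2]
    ring

lemma tanB_neg (x : ℝ) : ∀ n : ℕ, tanB (-x) n = tanB x n := by
  intro n
  induction n using Nat.twoStepInduction with
  | zero => simp [tanB]
  | one => simp [tanB]
  | more n ih1 ih2 =>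
    match n with
    | 0 => rw [tanB_two, tanB_two]
    | Nat.succ m =>
      rw [show m+1+2 = m+3 from rfl, tanB_succ, tanB_succ, ih1, ih2]
      ring

/-! The main estimate for `0 < x < π/2`. -/

lemma star_eq {x : ℝ} (hx : x ≠ 0) (n : ℕ) :
    vv x n * tanB x (n+2) = vv x (n+1) * tanB x (n+1) + 2*x^(2*n+1)*Real.cos x := by
  have hd := det_eq x n
  have w1 := W_eq hx n
  have w2 := W_eq hx (n+1)
  linear_combination (2*tanB x (n+2)) * w1 + (-2*tanB x (n+1)) * w2 + (2*Real.cos x) * hd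

lemma key_pos {x : ℝ} (h0 : 0 < x) (h1 : x < π/2) :
    Tendsto (fun n => tanA x (n + 2) / tanB x (n + 2)) atTop (nhds (Real.tan x)) := by
  have hx : x ≠ 0 := ne_of_gt h0
  have habs : |x| < π/2 := by rwa [abs_of_pos h0]
  have hcos : 0 < Real.cos x := Real.cos_pos_of_mem_Ioo ⟨by linarith [Real.pi_pos], h1⟩
  have vv_pos : ∀ n, 0 < vv x n := fun n =>
    div_pos (mul_pos (pow_pos h0 _) (II_pos habs n)) (by positivity)
  have B_pos : ∀ n, 0 < tanB x (n+1) := by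
    intro n
    induction n with
    | zero => norm_num [tanB]
    | succ n ih =>
      have hs := star_eq hx n
      nlinarith [vv_pos n, vv_pos (n+1), mul_pos (vv_pos (n+1)) ih,
        mul_pos (pow_pos h0 (2*n+1)) hcos]
  have B_lb : ∀ n, 2^n * Real.cos x ≤ tanB x (n+2) := by
    intro n
    have hs := star_eq hx n
    have hfac1 : (1:ℝ) ≤ (Nat.factorial n : ℝ) := by
      exact_mod_cast Nat.one_le_iff_ne_zero.mpr (Nat.factorial_ne_zero n)
    have h1' : 2*x^(2*n+1)*Real.cos x ≤ vv x n * tanB x (n+2) := by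
      nlinarith [mul_pos (vv_pos (n+1)) (B_pos n)]
    have hx21 : (0:ℝ) < x^(2*n+1) := pow_pos h0 _
    have hvv : vv x n = x^(2*n+1) * II x n / (2^n * (Nat.factorial n : ℝ)) := rfl
    rw [hvv, div_mul_eq_mul_div, le_div_iff₀ (by positivity)] at h1'
    -- h1' : 2*x^(2n+1)*cos x * (2^n * n!) ≤ x^(2n+1) * II x n * tanB x (n+2)
    have h2 : 2 * Real.cos x * (2^n * (Nat.factorial n : ℝ)) ≤ II x n * tanB x (n+2) := by
      nlinarith [hx21, h1']
    have h3 : II x n * tanB x (n+2) ≤ 2 * tanB x (n+2) := by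
      nlinarith [II_le_two x n, B_pos (n+1)]
    have h4 : 2*Real.cos x*(2^n*(1:ℝ)) ≤ 2*Real.cos x*(2^n*(Nat.factorial n : ℝ)) := by
      gcongr
    nlinarith [h4, h2, h3]
  have bound : ∀ n : ℕ, ‖tanA x (n+2)/tanB x (n+2) - Real.tan x‖
      ≤ (x^3/(2*Real.cos x^2)) * (x^2/4)^n := by
    intro n
    have hB : 0 < tanB x (n+2) := B_pos (n+1)
    have hW := W_eq hx (n+1)
    have hW' : Real.cos x * tanA x (n+2) - Real.sin x * tanB x (n+2) = -vv x (n+1)/2 := hW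
    have heq : tanA x (n+2)/tanB x (n+2) - Real.tan x
        = -vv x (n+1)/(2*Real.cos x*tanB x (n+2)) := by
      rw [Real.tan_eq_sin_div_cos]
      have h5 : tanA x (n+2)/tanB x (n+2) - Real.sin x / Real.cos x
          = (Real.cos x * tanA x (n+2) - Real.sin x * tanB x (n+2))/(Real.cos x * tanB x (n+2)) := by
        field_simp
      rw [h5, hW']
      ring
    rw [heq, Real.norm_eq_abs, abs_div, abs_neg,
      abs_of_pos (vv_pos (n+1)), abs_of_pos (by positivity : (0:ℝ) < 2*Real.cos x*tanB x (n+2))]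
    have hfac1 : (1:ℝ) ≤ (Nat.factorial (n+1) : ℝ) := by
      exact_mod_cast Nat.one_le_iff_ne_zero.mpr (Nat.factorial_ne_zero (n+1))
    have hv_le : vv x (n+1) ≤ x^(2*n+3) / 2^n := by
      have : vv x (n+1) = x^(2*(n+1)+1) * II x (n+1) / (2^(n+1)*(Nat.factorial (n+1) : ℝ)) := rfl
      rw [this]
      calc x^(2*(n+1)+1) * II x (n+1) / (2^(n+1)*(Nat.factorial (n+1) : ℝ))
          ≤ x^(2*(n+1)+1) * 2 / (2^(n+1)*1) := by
            apply div_le_div₀ (by positivity)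
              (mul_le_mul_of_nonneg_left (II_le_two x (n+1)) (by positivity)) (by positivity)
            gcongr
      _ = x^(2*n+3) / 2^n := by
            rw [show 2*(n+1)+1 = 2*n+3 from by ring, pow_succ]
            field_simp
            ring
    calc vv x (n+1) / (2*Real.cos x*tanB x (n+2))
        ≤ (x^(2*n+3) / 2^n) / (2*Real.cos x*(2^n*Real.cos x)) := by
          apply div_le_div₀ (by positivity) hv_le (by positivity)
          have := B_lb n
          nlinarith [hcos]
    _ = (x^3/(2*Real.cos x^2)) * (x^2/4)^n := by
          rw [div_pow, show ((4:ℝ))^n = 2^n*2^n from by rw [← mul_pow]; norm_num,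
            show 2*n+3 = 3 + (n*2) from by ring, pow_add, pow_mul]
          field_simp
          ring
  have hr : |x^2/4| < 1 := by
    rw [abs_of_nonneg (by positivity)]
    nlinarith [Real.pi_lt_d2]
  have htend : Tendsto (fun n : ℕ => (x^3/(2*Real.cos x^2)) * (x^2/4)^n) atTop (nhds 0) := by
    simpa using (tendsto_pow_atTop_nhds_zero_of_abs_lt_one hr).const_mul (x^3/(2*Real.cos x^2))
  have h0' := squeeze_zero_norm bound htend
  have := h0'.add_const (Real.tan x)
  simpa using this

theorem stmt6 (x : ℝ) (hx : 0 < |x|) (hx2 : |x| < π / 2) :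
    Tendsto (fun n => tanA x (n + 2) / tanB x (n + 2)) atTop (nhds (Real.tan x)) := by
  rcases lt_trichotomy x 0 with hneg | hzero | hpos
  · have h0 : 0 < -x := by linarith
    have h1 : -x < π/2 := by
      rw [abs_of_neg hneg] at hx2
      linarith
    have hk := key_pos h0 h1
    have hfun : ∀ n : ℕ, tanA x (n+2) / tanB x (n+2) = -(tanA (-x) (n+2) / tanB (-x) (n+2)) := by
      intro n
      have hA : tanA (-x) (n+2) = -tanA x (n+2) := by
        have := tanA_neg x (n+1)
        simpa using this
      have hB : tanB (-x) (n+2) = tanB x (n+2) := tanB_neg x (n+2)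
      rw [hA, hB]
      ring
    simp_rw [hfun]
    have := hk.neg
    rw [← Real.tan_neg, neg_neg] at this
    exact this
  · exfalso; rw [hzero] at hx; simp at hx
  · exact key_pos hpos (by rwa [abs_of_pos hpos] at hx2)
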